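/- For f, g, f' nonnegative functions in L²(λ) with g ≤ K·f λ-almost everywhere (K > 0), one has ∫ g f^{-1} f'² dλ ≤ K‖f − f'‖₂² + 2⟨g, f'⟩ − ⟨g, f⟩, where ⟨·,·⟩ and ‖·‖₂ denote the L²(λ) scalar product and norm, and g f^{-1} f'² is interpreted as 0 where f = 0 (noting g = 0 there a.e.). -/

import Mathlib

open MeasureTheory Real

/-- Lemma 8: For nonnegative `f, g, f' ∈ L²(lam)` with `g ≤ K·f` a.e.,
`∫ g f⁻¹ f'² dlam ≤ K‖f − f'‖₂² + 2⟨g, f'⟩ − ⟨g, f⟩`, where `g f⁻¹ f'²` is interpreted as `0`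
where `f = 0` (in Lean, `(f x)⁻¹ = 0` when `f x = 0`). -/
theorem stmt_4 {X : Type*} [MeasurableSpace X] (lam : Measure X) [SigmaFinite lam]
    (f g f' : X → ℝ) (K : ℝ) (hK : 0 < K)
    (hf : MemLp f 2 lam) (hg : MemLp g 2 lam) (hf' : MemLp f' 2 lam)
    (hfpos : ∀ x, 0 ≤ f x) (hgpos : ∀ x, 0 ≤ g x) (hf'pos : ∀ x, 0 ≤ f' x)
    (hdom : ∀ᵐ x ∂lam, g x ≤ K * f x) :
    ∫ x, g x * (f x)⁻¹ * (f' x) ^ 2 ∂lam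
      ≤ K * ∫ x, (f x - f' x) ^ 2 ∂lam
        + 2 * ∫ x, g x * f' x ∂lam - ∫ x, g x * f x ∂lam := by
  have hI1 : Integrable (fun x => (f x - f' x) ^ 2) lam := by
    have := (hf.sub hf').integrable_sq
    simpa using this
  have hmul : ∀ (u : X → ℝ), MemLp u 2 lam → Integrable (fun x => g x * u x) lam := by
    intro u hu
    have h := hu.smul (r := 1) hg
    simpa [smul_eq_mul, Pi.mul_def] using memLp_one_iff_integrable.mp h
  have hI2 : Integrable (fun x => g x * f' x) lam := hmul f' hf'
  have hI3 : Integrable (fun x => g x * f x) lam := hmul f hf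
  have hI4 : Integrable (fun x => (f' x) ^ 2) lam := hf'.integrable_sq
  have hmeas : AEStronglyMeasurable (fun x => g x * (f x)⁻¹ * (f' x) ^ 2) lam := by
    exact ((hg.aestronglyMeasurable.aemeasurable.mul
      hf.aestronglyMeasurable.aemeasurable.inv).mul
      (hf'.aestronglyMeasurable.aemeasurable.pow_const 2)).aestronglyMeasurable
  have hgf0 : ∀ᵐ x ∂lam, f x = 0 → g x = 0 := by
    filter_upwards [hdom] with x hx h0
    exact le_antisymm (by simpa [h0] using hx) (hgpos x)
  have hbound : ∀ᵐ x ∂lam, ‖g x * (f x)⁻¹ * (f' x) ^ 2‖ ≤ K * (f' x) ^ 2 := by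
    filter_upwards [hdom, hgf0] with x hx h0
    rw [Real.norm_eq_abs, abs_of_nonneg (mul_nonneg (mul_nonneg (hgpos x)
      (inv_nonneg.mpr (hfpos x))) (sq_nonneg _))]
    rcases eq_or_lt_of_le (hfpos x) with h | h
    · simp only [h0 h.symm, zero_mul]
      positivity
    · have hratio : g x * (f x)⁻¹ ≤ K := by
        rw [← div_eq_mul_inv, div_le_iff₀ h]
        linarith
      exact mul_le_mul_of_nonneg_right hratio (by positivity)
  have hLint : Integrable (fun x => g x * (f x)⁻¹ * (f' x) ^ 2) lam :=
    Integrable.mono' (hI4.const_mul K) hmeas hbound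
  have hle : ∀ᵐ x ∂lam, g x * (f x)⁻¹ * (f' x) ^ 2
      ≤ K * (f x - f' x) ^ 2 + 2 * (g x * f' x) - g x * f x := by
    filter_upwards [hdom, hgf0] with x hx h0
    rcases eq_or_lt_of_le (hfpos x) with h | h
    · have hg0 := h0 h.symm
      simp only [hg0, ← h, zero_mul, mul_zero, sub_zero, add_zero]
      positivity
    · have hfne : f x ≠ 0 := ne_of_gt h
      have hid : g x * (f x)⁻¹ * (f' x) ^ 2
          = g x * (f x)⁻¹ * (f x - f' x) ^ 2 + 2 * (g x * f' x) - g x * f x := by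
        field_simp
        ring
      rw [hid]
      have hratio : g x * (f x)⁻¹ ≤ K := by
        rw [← div_eq_mul_inv, div_le_iff₀ h]
        linarith [hx]
      have := mul_le_mul_of_nonneg_right hratio (sq_nonneg (f x - f' x))
      linarith
  have hRint : Integrable
      (fun x => K * (f x - f' x) ^ 2 + 2 * (g x * f' x) - g x * f x) lam :=
    ((hI1.const_mul K).add (hI2.const_mul 2)).sub hI3
  calc ∫ x, g x * (f x)⁻¹ * (f' x) ^ 2 ∂lam
      ≤ ∫ x, (K * (f x - f' x) ^ 2 + 2 * (g x * f' x) - g x * f x) ∂lam :=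
        integral_mono_ae hLint hRint hle
    _ = K * ∫ x, (f x - f' x) ^ 2 ∂lam + 2 * ∫ x, g x * f' x ∂lam
        - ∫ x, g x * f x ∂lam := by
      have hA : Integrable (fun x => K * (f x - f' x) ^ 2 + 2 * (g x * f' x)) lam :=
        (hI1.const_mul K).add (hI2.const_mul 2)
      have hB : Integrable (fun x => K * (f x - f' x) ^ 2) lam := hI1.const_mul K
      have hC : Integrable (fun x => 2 * (g x * f' x)) lam := hI2.const_mul 2
      rw [integral_sub hA hI3, integral_add hB hC, integral_const_mul, integral_const_mul]
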